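/- arXiv:0711.1213 — 3 statements merged into one kernel-verified Lean document; each statement's English description precedes it below -/
import Mathlib

section
/- If y(x) satisfies y'' + (y')^3 - y' = 0, and u(x) = (1/√2) exp(-x + y(x)), v(x) = (1/√2) exp(-x - y(x)), then u' v'' - v' u'' = 0, i.e. the point transformation (x,y) ↦ (u,v) maps the ODE to the free-particle equation d^2 v/du^2 = 0. -/
/-- If `y` satisfies `y'' + (y')³ - y' = 0` on an open interval and
`u = exp(y - x)/√2`, `v = exp(-y - x)/√2`, then `u' v'' - v' u'' = 0`,
i.e. the point transformation maps the ODE to `d²v/du² = 0`. -/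
theorem stmt1 (y : ℝ → ℝ) (I : Set ℝ) (hI : IsOpen I)
    (hy1 : ∀ x ∈ I, DifferentiableAt ℝ y x)
    (hy2 : ∀ x ∈ I, DifferentiableAt ℝ (deriv y) x)
    (hode : ∀ x ∈ I, deriv (deriv y) x + (deriv y x) ^ 3 - deriv y x = 0)
    (u v : ℝ → ℝ)
    (hu : ∀ x, u x = (1 / Real.sqrt 2) * Real.exp (-x + y x))
    (hv : ∀ x, v x = (1 / Real.sqrt 2) * Real.exp (-x - y x)) :
    ∀ x ∈ I, deriv u x * deriv (deriv v) x - deriv v x * deriv (deriv u) x = 0 := by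
  have hufun : u = fun t => (1 / Real.sqrt 2) * Real.exp (-t + y t) := funext hu
  have hvfun : v = fun t => (1 / Real.sqrt 2) * Real.exp (-t - y t) := funext hv
  have hU : ∀ x ∈ I, HasDerivAt u (u x * (deriv y x - 1)) x := by
    intro x hx
    have h : HasDerivAt (fun t : ℝ => -t + y t) (-1 + deriv y x) x :=
      (hasDerivAt_id x).neg.add (hy1 x hx).hasDerivAt
    have := (h.exp).const_mul (1 / Real.sqrt 2)
    rw [← hufun] at this
    refine this.congr_deriv ?_
    rw [hu]; ring
  have hV : ∀ x ∈ I, HasDerivAt v (-(v x * (deriv y x + 1))) x := by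
    intro x hx
    have h : HasDerivAt (fun t : ℝ => -t - y t) (-1 - deriv y x) x :=
      (hasDerivAt_id x).neg.sub (hy1 x hx).hasDerivAt
    have := (h.exp).const_mul (1 / Real.sqrt 2)
    rw [← hvfun] at this
    refine this.congr_deriv ?_
    rw [hv]; ring
  intro x hx
  have hmem : I ∈ nhds x := hI.mem_nhds hx
  have hUe : deriv u =ᶠ[nhds x] fun t => u t * (deriv y t - 1) :=
    Filter.eventually_of_mem hmem fun t ht => (hU t ht).deriv
  have hVe : deriv v =ᶠ[nhds x] fun t => -(v t * (deriv y t + 1)) :=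
    Filter.eventually_of_mem hmem fun t ht => (hV t ht).deriv
  have hU2 : HasDerivAt (fun t => u t * (deriv y t - 1))
      (u x * (deriv y x - 1) * (deriv y x - 1) + u x * deriv (deriv y) x) x := by
    have h := (hU x hx).mul (((hy2 x hx).hasDerivAt).sub_const 1)
    exact h
  have hV2 : HasDerivAt (fun t => -(v t * (deriv y t + 1)))
      (-((-(v x * (deriv y x + 1))) * (deriv y x + 1) + v x * deriv (deriv y) x)) x := by
    have h := ((hV x hx).mul (((hy2 x hx).hasDerivAt).add_const 1)).neg
    exact h
  have hdu2 : deriv (deriv u) x = u x * (deriv y x - 1) * (deriv y x - 1) + u x * deriv (deriv y) x := by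
    rw [hUe.deriv_eq]; exact hU2.deriv
  have hdv2 : deriv (deriv v) x = -((-(v x * (deriv y x + 1))) * (deriv y x + 1) + v x * deriv (deriv y) x) := by
    rw [hVe.deriv_eq]; exact hV2.deriv
  rw [(hU x hx).deriv, (hV x hx).deriv, hdu2, hdv2]
  linear_combination (2 * u x * v x) * hode x hx
end

section
/- If b and e satisfy Lie's overdetermined system b_x = -(1/3)E_{1y} + (2/3)E_{2x} + be - E₀E₃, b_y = E_{3x} - b² + bE₂ - E₁E₃ + eE₃, e_x = E_{0y} + e² - eE₁ - bE₀ + E₀E₂, e_y = (2/3)E_{1y} - (1/3)E_{2x} - be + E₀E₃, and all functions are twice continuously differentiable, then the Tressé conditions hold: 3(E₁E₃)_x - E_{1yy} + 2E_{2xy} - 3(E₀E₃)_y + E₂E_{1y} - 2E₂E_{2x} - 3E_{3xx} - 3E₃E_{0y} = 0 and 3(E₀E₃)_x + 2E_{1xy} - 3E_{0yy} - E_{2xx} - E₁E_{2x} + 2E₁E_{1y} - 3(E₀E₂)_y + 3E₀E_{3x} = 0. -/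
/-- Partial derivative of a two-variable function in the first variable. -/
noncomputable def pX (f : ℝ → ℝ → ℝ) : ℝ → ℝ → ℝ :=
  fun x y => deriv (fun t => f t y) x

/-- Partial derivative of a two-variable function in the second variable. -/
noncomputable def pY (f : ℝ → ℝ → ℝ) : ℝ → ℝ → ℝ :=
  fun x y => deriv (fun t => f x t) y

section toolkit

variable {F : ℝ → ℝ → ℝ} (hF : ContDiff ℝ 2 (fun p : ℝ × ℝ => F p.1 p.2))

private noncomputable def G1 (F : ℝ → ℝ → ℝ) : ℝ × ℝ → (ℝ × ℝ →L[ℝ] ℝ) :=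
  fderiv ℝ (fun p : ℝ × ℝ => F p.1 p.2)

lemma lineX (x y : ℝ) : HasDerivAt (fun t : ℝ => ((t, y) : ℝ × ℝ)) (1, 0) x :=
  (hasDerivAt_id x).prodMk (hasDerivAt_const x y)

lemma lineY (x y : ℝ) : HasDerivAt (fun t : ℝ => ((x, t) : ℝ × ℝ)) (0, 1) y :=
  (hasDerivAt_const y x).prodMk (hasDerivAt_id y)

include hF

lemma hdX (x y : ℝ) : HasDerivAt (fun t => F t y) (pX F x y) x := by
  have h := ((hF.differentiable two_ne_zero (x, y)).hasFDerivAt).comp_hasDerivAt x (lineX x y)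
  exact h.differentiableAt.hasDerivAt

lemma hdY (x y : ℝ) : HasDerivAt (fun t => F x t) (pY F x y) y := by
  have h := ((hF.differentiable two_ne_zero (x, y)).hasFDerivAt).comp_hasDerivAt y (lineY x y)
  exact h.differentiableAt.hasDerivAt

lemma pX_eq (x y : ℝ) : pX F x y = G1 F (x, y) (1, 0) := by
  have h := ((hF.differentiable two_ne_zero (x, y)).hasFDerivAt).comp_hasDerivAt x (lineX x y)
  exact h.deriv

lemma pY_eq (x y : ℝ) : pY F x y = G1 F (x, y) (0, 1) := by
  have h := ((hF.differentiable two_ne_zero (x, y)).hasFDerivAt).comp_hasDerivAt y (lineY x y)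
  exact h.deriv

lemma hG1 : ContDiff ℝ 1 (G1 F) := hF.fderiv_right (by norm_num)

lemma hdG1X (x y : ℝ) (v : ℝ × ℝ) :
    HasDerivAt (fun t => G1 F (t, y) v) (fderiv ℝ (G1 F) (x, y) (1, 0) v) x := by
  have h1 : HasDerivAt (fun t => G1 F (t, y)) (fderiv ℝ (G1 F) (x, y) (1, 0)) x :=
    (((hG1 hF).differentiable one_ne_zero (x, y)).hasFDerivAt).comp_hasDerivAt x (lineX x y)
  simpa using h1.clm_apply (hasDerivAt_const x v)

lemma hdG1Y (x y : ℝ) (v : ℝ × ℝ) :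
    HasDerivAt (fun t => G1 F (x, t) v) (fderiv ℝ (G1 F) (x, y) (0, 1) v) y := by
  have h1 : HasDerivAt (fun t => G1 F (x, t)) (fderiv ℝ (G1 F) (x, y) (0, 1)) y :=
    (((hG1 hF).differentiable one_ne_zero (x, y)).hasFDerivAt).comp_hasDerivAt y (lineY x y)
  simpa using h1.clm_apply (hasDerivAt_const y v)

lemma hdpXX (x y : ℝ) : HasDerivAt (fun t => pX F t y) (pX (pX F) x y) x := by
  have h : HasDerivAt (fun t => pX F t y) (fderiv ℝ (G1 F) (x, y) (1, 0) (1, 0)) x := by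
    simp only [pX_eq hF]; exact hdG1X hF x y (1, 0)
  rw [show pX (pX F) x y = _ from h.deriv]
  exact h

lemma hdpXY (x y : ℝ) : HasDerivAt (fun t => pX F x t) (pY (pX F) x y) y := by
  have h : HasDerivAt (fun t => pX F x t) (fderiv ℝ (G1 F) (x, y) (0, 1) (1, 0)) y := by
    simp only [pX_eq hF]; exact hdG1Y hF x y (1, 0)
  rw [show pY (pX F) x y = _ from h.deriv]
  exact h

lemma hdpYX (x y : ℝ) : HasDerivAt (fun t => pY F t y) (pX (pY F) x y) x := by
  have h : HasDerivAt (fun t => pY F t y) (fderiv ℝ (G1 F) (x, y) (1, 0) (0, 1)) x := by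
    simp only [pY_eq hF]; exact hdG1X hF x y (0, 1)
  rw [show pX (pY F) x y = _ from h.deriv]
  exact h

lemma hdpYY (x y : ℝ) : HasDerivAt (fun t => pY F x t) (pY (pY F) x y) y := by
  have h : HasDerivAt (fun t => pY F x t) (fderiv ℝ (G1 F) (x, y) (0, 1) (0, 1)) y := by
    simp only [pY_eq hF]; exact hdG1Y hF x y (0, 1)
  rw [show pY (pY F) x y = _ from h.deriv]
  exact h

lemma clairaut (x y : ℝ) : pY (pX F) x y = pX (pY F) x y := by
  have h1 : pY (pX F) x y = fderiv ℝ (G1 F) (x, y) (0, 1) (1, 0) := by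
    have h : HasDerivAt (fun t => pX F x t) (fderiv ℝ (G1 F) (x, y) (0, 1) (1, 0)) y := by
      simp only [pX_eq hF]; exact hdG1Y hF x y (1, 0)
    exact h.deriv
  have h2 : pX (pY F) x y = fderiv ℝ (G1 F) (x, y) (1, 0) (0, 1) := by
    have h : HasDerivAt (fun t => pY F t y) (fderiv ℝ (G1 F) (x, y) (1, 0) (0, 1)) x := by
      simp only [pY_eq hF]; exact hdG1X hF x y (0, 1)
    exact h.deriv
  rw [h1, h2]
  exact second_derivative_symmetric
    (fun p => (hF.differentiable two_ne_zero p).hasFDerivAt)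
    (((hG1 hF).differentiable one_ne_zero (x, y)).hasFDerivAt) _ _

end toolkit


/-- If `b` and `e` satisfy Lie's overdetermined system and all functions are C²,
then the Tressé conditions hold. -/
theorem stmt7 (E0 E1 E2 E3 b e : ℝ → ℝ → ℝ)
    (hC2 : ∀ F ∈ [E0, E1, E2, E3, b, e],
      ContDiff ℝ 2 (fun p : ℝ × ℝ => F p.1 p.2))
    (hLie1 : ∀ x y : ℝ, pX b x y = -(1 / 3) * pY E1 x y + (2 / 3) * pX E2 x y
        + b x y * e x y - E0 x y * E3 x y)
    (hLie2 : ∀ x y : ℝ, pY b x y = pX E3 x y - (b x y) ^ 2 + b x y * E2 x y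
        - E1 x y * E3 x y + e x y * E3 x y)
    (hLie3 : ∀ x y : ℝ, pX e x y = pY E0 x y + (e x y) ^ 2 - e x y * E1 x y
        - b x y * E0 x y + E0 x y * E2 x y)
    (hLie4 : ∀ x y : ℝ, pY e x y = (2 / 3) * pY E1 x y - (1 / 3) * pX E2 x y
        - b x y * e x y + E0 x y * E3 x y) :
    ∀ x y : ℝ,
      (3 * pX (fun x y => E1 x y * E3 x y) x y
        - pY (pY E1) x y + 2 * pY (pX E2) x y
        - 3 * pY (fun x y => E0 x y * E3 x y) x y
        + E2 x y * pY E1 x y - 2 * E2 x y * pX E2 x y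
        - 3 * pX (pX E3) x y - 3 * E3 x y * pY E0 x y = 0) ∧
      (3 * pX (fun x y => E0 x y * E3 x y) x y
        + 2 * pY (pX E1) x y - 3 * pY (pY E0) x y
        - pX (pX E2) x y - E1 x y * pX E2 x y + 2 * E1 x y * pY E1 x y
        - 3 * pY (fun x y => E0 x y * E2 x y) x y + 3 * E0 x y * pX E3 x y = 0) := by
  have hE0 := hC2 E0 (by simp)
  have hE1 := hC2 E1 (by simp)
  have hE2 := hC2 E2 (by simp)
  have hE3 := hC2 E3 (by simp)
  have hb := hC2 b (by simp)
  have he := hC2 e (by simp)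
  intro x y
  -- product rules appearing in the goal
  have hp1 : pX (fun x y => E1 x y * E3 x y) x y
      = pX E1 x y * E3 x y + E1 x y * pX E3 x y :=
    ((hdX hE1 x y).mul (hdX hE3 x y)).deriv
  have hp2 : pY (fun x y => E0 x y * E3 x y) x y
      = pY E0 x y * E3 x y + E0 x y * pY E3 x y :=
    ((hdY hE0 x y).mul (hdY hE3 x y)).deriv
  have hp3 : pX (fun x y => E0 x y * E3 x y) x y
      = pX E0 x y * E3 x y + E0 x y * pX E3 x y :=
    ((hdX hE0 x y).mul (hdX hE3 x y)).deriv
  have hp4 : pY (fun x y => E0 x y * E2 x y) x y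
      = pY E0 x y * E2 x y + E0 x y * pY E2 x y :=
    ((hdY hE0 x y).mul (hdY hE2 x y)).deriv
  -- differentiate hLie1 in y
  have hfun1 : (fun t => pX b x t) = (fun t => -(1 / 3) * pY E1 x t
      + (2 / 3) * pX E2 x t + b x t * e x t - E0 x t * E3 x t) :=
    funext fun t => hLie1 x t
  have h1 : pY (pX b) x y = -(1 / 3) * pY (pY E1) x y + (2 / 3) * pY (pX E2) x y
      + (pY b x y * e x y + b x y * pY e x y)
      - (pY E0 x y * E3 x y + E0 x y * pY E3 x y) := by
    have h : HasDerivAt (fun t => pX b x t) (-(1 / 3) * pY (pY E1) x y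
        + (2 / 3) * pY (pX E2) x y
        + (pY b x y * e x y + b x y * pY e x y)
        - (pY E0 x y * E3 x y + E0 x y * pY E3 x y)) y := by
      rw [hfun1]
      exact ((((hdpYY hE1 x y).const_mul (-(1 / 3))).add
        ((hdpXY hE2 x y).const_mul (2 / 3))).add
        ((hdY hb x y).mul (hdY he x y))).sub
        ((hdY hE0 x y).mul (hdY hE3 x y))
    exact h.deriv
  -- differentiate hLie2 in x
  have hfun2 : (fun t => pY b t y) = (fun t => pX E3 t y - b t y ^ 2
      + b t y * E2 t y - E1 t y * E3 t y + e t y * E3 t y) :=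
    funext fun t => hLie2 t y
  have h2 : pX (pY b) x y = pX (pX E3) x y
      - ((2 : ℕ) : ℝ) * b x y ^ (2 - 1) * pX b x y
      + (pX b x y * E2 x y + b x y * pX E2 x y)
      - (pX E1 x y * E3 x y + E1 x y * pX E3 x y)
      + (pX e x y * E3 x y + e x y * pX E3 x y) := by
    have h : HasDerivAt (fun t => pY b t y) (pX (pX E3) x y
        - ((2 : ℕ) : ℝ) * b x y ^ (2 - 1) * pX b x y
        + (pX b x y * E2 x y + b x y * pX E2 x y)
        - (pX E1 x y * E3 x y + E1 x y * pX E3 x y)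
        + (pX e x y * E3 x y + e x y * pX E3 x y)) x := by
      rw [hfun2]
      exact (((((hdpXX hE3 x y).sub ((hdX hb x y).pow 2)).add
        ((hdX hb x y).mul (hdX hE2 x y))).sub
        ((hdX hE1 x y).mul (hdX hE3 x y))).add
        ((hdX he x y).mul (hdX hE3 x y)))
    exact h.deriv
  -- differentiate hLie3 in y
  have hfun3 : (fun t => pX e x t) = (fun t => pY E0 x t + e x t ^ 2
      - e x t * E1 x t - b x t * E0 x t + E0 x t * E2 x t) :=
    funext fun t => hLie3 x t
  have h3 : pY (pX e) x y = pY (pY E0) x y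
      + ((2 : ℕ) : ℝ) * e x y ^ (2 - 1) * pY e x y
      - (pY e x y * E1 x y + e x y * pY E1 x y)
      - (pY b x y * E0 x y + b x y * pY E0 x y)
      + (pY E0 x y * E2 x y + E0 x y * pY E2 x y) := by
    have h : HasDerivAt (fun t => pX e x t) (pY (pY E0) x y
        + ((2 : ℕ) : ℝ) * e x y ^ (2 - 1) * pY e x y
        - (pY e x y * E1 x y + e x y * pY E1 x y)
        - (pY b x y * E0 x y + b x y * pY E0 x y)
        + (pY E0 x y * E2 x y + E0 x y * pY E2 x y)) y := by
      rw [hfun3]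
      exact (((((hdpYY hE0 x y).add ((hdY he x y).pow 2)).sub
        ((hdY he x y).mul (hdY hE1 x y))).sub
        ((hdY hb x y).mul (hdY hE0 x y))).add
        ((hdY hE0 x y).mul (hdY hE2 x y)))
    exact h.deriv
  -- differentiate hLie4 in x
  have hfun4 : (fun t => pY e t y) = (fun t => (2 / 3) * pY E1 t y
      - (1 / 3) * pX E2 t y - b t y * e t y + E0 t y * E3 t y) :=
    funext fun t => hLie4 t y
  have h4 : pX (pY e) x y = (2 / 3) * pX (pY E1) x y
      - (1 / 3) * pX (pX E2) x y
      - (pX b x y * e x y + b x y * pX e x y)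
      + (pX E0 x y * E3 x y + E0 x y * pX E3 x y) := by
    have h : HasDerivAt (fun t => pY e t y) ((2 / 3) * pX (pY E1) x y
        - (1 / 3) * pX (pX E2) x y
        - (pX b x y * e x y + b x y * pX e x y)
        + (pX E0 x y * E3 x y + E0 x y * pX E3 x y)) x := by
      rw [hfun4]
      exact ((((hdpYX hE1 x y).const_mul (2 / 3)).sub
        ((hdpXX hE2 x y).const_mul (1 / 3))).sub
        ((hdX hb x y).mul (hdX he x y))).add
        ((hdX hE0 x y).mul (hdX hE3 x y))
    exact h.deriv
  have keyb := h1.symm.trans ((clairaut hb x y).trans h2)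
  have keye := h3.symm.trans ((clairaut he x y).trans h4)
  have hcE1 : pY (pX E1) x y = pX (pY E1) x y := clairaut hE1 x y
  simp only [hLie1, hLie2, hLie3, hLie4] at keyb keye
  norm_num at keyb keye
  constructor
  · rw [hp1, hp2]
    linear_combination 3 * keyb
  · rw [hp3, hp4]
    linear_combination (-3) * keye + 2 * hcE1
end

section
/- If X¹, ..., Xⁿ are smooth functions of (x¹, ..., xⁿ) and along a curve the functions Xⁱ (i ≥ 2) are affine functions of X¹ (i.e. d²Xⁱ/d(X¹)² = 0 along the curve with X¹ as parameter), then the curve components xⁱ(x¹) satisfy J^i_j (x^j)'' + G^i_{kj}(x^k)'(x^j)'' + Δ^i_{jkl}(x^j)'(x^k)'(x^l)' + Λ^i_{jk}(x^j)'(x^k)' + Ω^i_j(x^j)' + E^i = 0 for i = 2,...,n, where J^i_j = X¹_{,1}X^i_{,j} - X¹_{,j}X^i_{,1}, G^i_{kj} = X¹_{,k}X^i_{,j} - X¹_{,j}X^i_{,k}, Δ^i_{jkl} = X¹_{,l}X^i_{,jk} - X¹_{,jk}X^i_{,l}, Λ^i_{jl} = 2X¹_{,l}X^i_{,1j} - 2X¹_{,1j}X^i_{,l}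 + X¹_{,1}X^i_{,jl} - X^i_{,1}X¹_{,jl}, Ω^i_j = 2X¹_{,1}X^i_{,1j} - 2X¹_{,1j}X^i_{,1} + X¹_{,j}X^i_{,11} - X¹_{,11}X^i_{,j}, E^i = X¹_{,1}X^i_{,11} - X¹_{,11}X^i_{,1}, with indices j,k,l ranging over 2,...,n (repeated indices summed) and prime denoting d/dx¹. -/
/-- Partial derivative of `f : (Fin n → ℝ) → ℝ` in the `j`-th coordinate at `p`. -/
noncomputable def pdrv {n : ℕ} (j : Fin n) (f : (Fin n → ℝ) → ℝ) (p : Fin n → ℝ) : ℝ :=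
  deriv (fun s => f (Function.update p j s)) (p j)

/-- First partial as a scalar. -/
noncomputable def Afn {n : ℕ} (f : (Fin n → ℝ) → ℝ) (p : Fin n → ℝ) (j : Fin n) : ℝ :=
  fderiv ℝ f p (Pi.single j 1)

/-- Second partial as a scalar. -/
noncomputable def Bfn {n : ℕ} (f : (Fin n → ℝ) → ℝ) (p : Fin n → ℝ) (k j : Fin n) : ℝ :=
  fderiv ℝ (fderiv ℝ f) p (Pi.single k 1) (Pi.single j 1)

lemma pdrv_eq_Afn {n : ℕ} (j : Fin n) {f : (Fin n → ℝ) → ℝ} (p : Fin n → ℝ)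
    (hf : DifferentiableAt ℝ f p) :
    pdrv j f p = Afn f p j := by
  have hu : Function.update p j (p j) = p := Function.update_eq_self j p
  have h1 : HasDerivAt (fun s => f (Function.update p j s))
      (fderiv ℝ f p (Pi.single j 1)) (p j) := by
    have h2 : HasFDerivAt f (fderiv ℝ f p) (Function.update p j (p j)) := by
      rw [hu]; exact hf.hasFDerivAt
    exact h2.comp_hasDerivAt (p j) (hasDerivAt_update p j (p j))
  exact h1.deriv

lemma pdrv2_eq_Bfn {n : ℕ} (j k : Fin n) {f : (Fin n → ℝ) → ℝ} (p : Fin n → ℝ)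
    (hf : ContDiff ℝ 2 f) :
    pdrv k (pdrv j f) p = Bfn f p k j := by
  have hfd : Differentiable ℝ f := hf.differentiable two_ne_zero
  have hF : Differentiable ℝ (fderiv ℝ f) :=
    (hf.fderiv_right (m := 1) le_rfl).differentiable one_ne_zero
  have hj : pdrv j f = fun q => fderiv ℝ f q (Pi.single j 1) :=
    funext fun q => pdrv_eq_Afn j q (hfd q)
  rw [hj, pdrv_eq_Afn k p ((hF p).clm_apply (differentiableAt_const _))]
  unfold Afn Bfn
  rw [fderiv_clm_apply (hF p) (differentiableAt_const _)]
  simp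

lemma Bfn_symm {n : ℕ} {f : (Fin n → ℝ) → ℝ} (p : Fin n → ℝ)
    (hf : ContDiff ℝ 2 f) (k j : Fin n) : Bfn f p k j = Bfn f p j k :=
  (hf.contDiffAt.isSymmSndFDerivAt (by simp)) _ _

lemma clm_expand {n : ℕ} (A : (Fin n → ℝ) →L[ℝ] ℝ) (y : Fin n → ℝ) :
    A y = ∑ m : Fin n, y m * A (Pi.single m 1) := by
  have h : y = ∑ m : Fin n, y m • (Pi.single m (1 : ℝ) : Fin n → ℝ) := by
    funext j
    simp [Pi.single_apply]
  conv_lhs => rw [h]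
  rw [map_sum]
  simp [smul_eq_mul]

lemma clm2_expand {n : ℕ} (B : (Fin n → ℝ) →L[ℝ] (Fin n → ℝ) →L[ℝ] ℝ) (y z : Fin n → ℝ) :
    B y z = ∑ a : Fin n, ∑ b : Fin n, y a * z b * B (Pi.single a 1) (Pi.single b 1) := by
  have h1 : B y z = B.flip z y := rfl
  rw [h1, clm_expand (B.flip z) y]
  refine Finset.sum_congr rfl fun a _ => ?_
  have h2 : B.flip z (Pi.single a 1) = B (Pi.single a 1) z := rfl
  rw [h2, clm_expand (B (Pi.single a 1)) z, Finset.mul_sum]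
  exact Finset.sum_congr rfl fun b _ => by ring

section chain
variable {n : ℕ} {X : (Fin n → ℝ) → ℝ} {x : Fin n → ℝ → ℝ}

lemma curve_hasDerivAt (hxC : ∀ i, ContDiff ℝ 2 (x i)) (s : ℝ) :
    HasDerivAt (fun s => (fun m => x m s)) (fun m => deriv (x m) s) s :=
  hasDerivAt_pi.2 fun m => (((hxC m).differentiable two_ne_zero) s).hasDerivAt

lemma chain1 (hX : ContDiff ℝ 2 X) (hxC : ∀ i, ContDiff ℝ 2 (x i)) (t : ℝ) :
    deriv (fun s => X (fun m => x m s)) t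
      = ∑ m : Fin n, deriv (x m) t * Afn X (fun m => x m t) m := by
  have h : HasDerivAt (fun s => X (fun m => x m s))
      (fderiv ℝ X (fun m => x m t) (fun m => deriv (x m) t)) t :=
    ((hX.differentiable two_ne_zero) _).hasFDerivAt.comp_hasDerivAt t (curve_hasDerivAt hxC t)
  rw [h.deriv, clm_expand]
  rfl

lemma chain2 (hX : ContDiff ℝ 2 X) (hxC : ∀ i, ContDiff ℝ 2 (x i)) (t : ℝ) :
    deriv (deriv (fun s => X (fun m => x m s))) t
      = (∑ a : Fin n, ∑ b : Fin n,
            deriv (x a) t * deriv (x b) t * Bfn X (fun m => x m t) a b)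
        + ∑ m : Fin n, deriv (deriv (x m)) t * Afn X (fun m => x m t) m := by
  have hd : deriv (fun s => X (fun m => x m s))
      = fun s => fderiv ℝ X (fun m => x m s) (fun m => deriv (x m) s) := by
    funext s
    exact (((hX.differentiable two_ne_zero) _).hasFDerivAt.comp_hasDerivAt s
      (curve_hasDerivAt hxC s)).deriv
  rw [hd]
  have hF : Differentiable ℝ (fderiv ℝ X) :=
    (hX.fderiv_right (m := 1) le_rfl).differentiable one_ne_zero
  have hc : HasDerivAt (fun s => fderiv ℝ X (fun m => x m s))
      (fderiv ℝ (fderiv ℝ X) (fun m => x m t) (fun m => deriv (x m) t)) t :=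
    (hF _).hasFDerivAt.comp_hasDerivAt t (curve_hasDerivAt hxC t)
  have hu : HasDerivAt (fun s => (fun m => deriv (x m) s))
      (fun m => deriv (deriv (x m)) t) t := by
    refine hasDerivAt_pi.2 fun m => ?_
    have h2 : ContDiff ℝ ((1 : WithTop ℕ∞) + 1) (x m) := by
      have h3 : ((2 : ℕ∞) : WithTop ℕ∞) = (1 : WithTop ℕ∞) + 1 := by norm_num
      exact h3 ▸ hxC m
    have h4 : Differentiable ℝ (deriv (x m)) :=
      (contDiff_succ_iff_deriv.1 h2).2.2.differentiable one_ne_zero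
    exact (h4 t).hasDerivAt
  have h5 := (hc.clm_apply hu).deriv
  rw [h5, clm2_expand, clm_expand]
  rfl

open Finset

variable {ι : Type*} [DecidableEq ι]

lemma L1 (s : Finset ι) (a b w : ι → ℝ) (P Q : ℝ) :
    ∑ j ∈ s, (P * b j - a j * Q) * w j
      = P * (∑ j ∈ s, w j * b j) - Q * (∑ j ∈ s, w j * a j) := by
  rw [Finset.mul_sum, Finset.mul_sum, ← Finset.sum_sub_distrib]
  exact Finset.sum_congr rfl fun j _ => by ring

lemma L2 (s : Finset ι) (a b u w : ι → ℝ) :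
    ∑ k ∈ s, ∑ j ∈ s, (a k * b j - a j * b k) * u k * w j
      = (∑ k ∈ s, u k * a k) * (∑ j ∈ s, w j * b j)
        - (∑ k ∈ s, u k * b k) * (∑ j ∈ s, w j * a j) := by
  rw [Finset.sum_mul_sum, Finset.sum_mul_sum, ← Finset.sum_sub_distrib]
  refine Finset.sum_congr rfl fun k _ => ?_
  rw [← Finset.sum_sub_distrib]
  exact Finset.sum_congr rfl fun j _ => by ring

lemma L3 (s : Finset ι) (a b u : ι → ℝ) (Qi Q0 : ι → ι → ℝ) :
    ∑ j ∈ s, ∑ k ∈ s, ∑ l ∈ s, (a l * Qi k j - Q0 k j * b l) * u j * u k * u l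
      = (∑ l ∈ s, u l * a l) * (∑ c ∈ s, ∑ d ∈ s, u c * u d * Qi c d)
        - (∑ l ∈ s, u l * b l) * (∑ c ∈ s, ∑ d ∈ s, u c * u d * Q0 c d) := by
  have h : ∀ j ∈ s, ∀ k ∈ s,
      (∑ l ∈ s, (a l * Qi k j - Q0 k j * b l) * u j * u k * u l)
        = (u j * u k * Qi k j) * (∑ l ∈ s, u l * a l)
          - (u j * u k * Q0 k j) * (∑ l ∈ s, u l * b l) := by
    intro j _ k _
    rw [Finset.mul_sum, Finset.mul_sum, ← Finset.sum_sub_distrib]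
    exact Finset.sum_congr rfl fun l _ => by ring
  calc ∑ j ∈ s, ∑ k ∈ s, ∑ l ∈ s, (a l * Qi k j - Q0 k j * b l) * u j * u k * u l
      = ∑ j ∈ s, ∑ k ∈ s, ((u j * u k * Qi k j) * (∑ l ∈ s, u l * a l)
          - (u j * u k * Q0 k j) * (∑ l ∈ s, u l * b l)) := by
        refine Finset.sum_congr rfl fun j hj => Finset.sum_congr rfl fun k hk => h j hj k hk
    _ = (∑ j ∈ s, ∑ k ∈ s, u j * u k * Qi k j) * (∑ l ∈ s, u l * a l)
          - (∑ j ∈ s, ∑ k ∈ s, u j * u k * Q0 k j) * (∑ l ∈ s, u l * b l) := by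
        simp only [Finset.sum_sub_distrib, ← Finset.sum_mul]
    _ = _ := by
        rw [Finset.sum_comm (f := fun j k => u j * u k * Qi k j),
          Finset.sum_comm (f := fun j k => u j * u k * Q0 k j)]
        have e1 : ∀ F : ι → ι → ℝ, (∑ k ∈ s, ∑ j ∈ s, u j * u k * F k j)
            = ∑ c ∈ s, ∑ d ∈ s, u c * u d * F c d := by
          intro F
          exact Finset.sum_congr rfl fun c _ => Finset.sum_congr rfl fun d _ => by ring
        rw [e1, e1]
        ring

lemma L4 (s : Finset ι) (a b u : ι → ℝ) (Ri R0 : ι → ℝ) (Qi Q0 : ι → ι → ℝ) (P Q : ℝ) :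
    ∑ j ∈ s, ∑ l ∈ s, (2 * a l * Ri j - 2 * R0 j * b l + P * Qi l j - Q * Q0 l j) * u j * u l
      = 2 * (∑ l ∈ s, u l * a l) * (∑ j ∈ s, u j * Ri j)
        - 2 * (∑ l ∈ s, u l * b l) * (∑ j ∈ s, u j * R0 j)
        + P * (∑ c ∈ s, ∑ d ∈ s, u c * u d * Qi c d)
        - Q * (∑ c ∈ s, ∑ d ∈ s, u c * u d * Q0 c d) := by
  have h : ∀ j ∈ s,
      (∑ l ∈ s, (2 * a l * Ri j - 2 * R0 j * b l + P * Qi l j - Q * Q0 l j) * u j * u l)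
        = 2 * (u j * Ri j) * (∑ l ∈ s, u l * a l) - 2 * (u j * R0 j) * (∑ l ∈ s, u l * b l)
          + P * (∑ l ∈ s, u l * u j * Qi l j) - Q * (∑ l ∈ s, u l * u j * Q0 l j) := by
    intro j _
    simp only [Finset.mul_sum]
    rw [← Finset.sum_sub_distrib, ← Finset.sum_add_distrib, ← Finset.sum_sub_distrib]
    exact Finset.sum_congr rfl fun l _ => by ring
  rw [Finset.sum_congr rfl h]
  simp only [Finset.sum_sub_distrib, Finset.sum_add_distrib, ← Finset.sum_mul, ← Finset.mul_sum]
  have e1 : ∀ F : ι → ι → ℝ, (∑ j ∈ s, ∑ l ∈ s, u l * u j * F l j)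
      = ∑ c ∈ s, ∑ d ∈ s, u c * u d * F c d := by
    intro F
    rw [Finset.sum_comm]
  rw [e1, e1]
  ring

lemma L5 (s : Finset ι) (a b u : ι → ℝ) (Ri R0 : ι → ℝ) (P Q qi q0 : ℝ) :
    ∑ j ∈ s, (2 * P * Ri j - 2 * R0 j * Q + a j * qi - q0 * b j) * u j
      = 2 * P * (∑ j ∈ s, u j * Ri j) - 2 * Q * (∑ j ∈ s, u j * R0 j)
        + qi * (∑ j ∈ s, u j * a j) - q0 * (∑ j ∈ s, u j * b j) := by
  simp only [Finset.mul_sum]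
  rw [← Finset.sum_sub_distrib, ← Finset.sum_add_distrib, ← Finset.sum_sub_distrib]
  exact Finset.sum_congr rfl fun j _ => by ring

lemma split1 (s : Finset ι) (i : ι) (hi : i ∈ s) (c u : ι → ℝ) (hu : u i = 1) :
    ∑ m ∈ s, u m * c m = c i + ∑ m ∈ s.erase i, u m * c m := by
  rw [← Finset.add_sum_erase _ _ hi, hu, one_mul]

lemma split0 (s : Finset ι) (i : ι) (hi : i ∈ s) (c u : ι → ℝ) (hu : u i = 0) :
    ∑ m ∈ s, u m * c m = ∑ m ∈ s.erase i, u m * c m := by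
  rw [← Finset.add_sum_erase _ _ hi, hu, zero_mul, zero_add]

lemma split2 (s : Finset ι) (i : ι) (hi : i ∈ s) (Q : ι → ι → ℝ) (u : ι → ℝ)
    (hu : u i = 1) (hQ : ∀ a b, Q a b = Q b a) :
    ∑ a ∈ s, ∑ b ∈ s, u a * u b * Q a b
      = Q i i + 2 * (∑ b ∈ s.erase i, u b * Q i b)
        + ∑ a ∈ s.erase i, ∑ b ∈ s.erase i, u a * u b * Q a b := by
  rw [← Finset.add_sum_erase _ (fun a => ∑ b ∈ s, u a * u b * Q a b) hi]
  have h1 : (∑ b ∈ s, u i * u b * Q i b) = Q i i + ∑ b ∈ s.erase i, u b * Q i b := by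
    rw [← Finset.add_sum_erase _ _ hi, hu]
    simp only [one_mul]
  have h2 : ∀ a ∈ s.erase i, (∑ b ∈ s, u a * u b * Q a b)
      = u a * Q i a + ∑ b ∈ s.erase i, u a * u b * Q a b := by
    intro a _
    rw [← Finset.add_sum_erase _ _ hi, hu, mul_one, hQ a i]
  rw [h1, Finset.sum_congr rfl h2, Finset.sum_add_distrib]
  ring

/-- If the `Xⁱ` (`i ≥ 2`) are affine functions of `X¹` along the curve
`γ(t) = (t, x²(t), …, xⁿ(t))`, then the curve components satisfy the general
linearizable system `Jⁱⱼ(xʲ)'' + Gⁱₖⱼ(xᵏ)'(xʲ)'' + Δⁱⱼₖₗ(xʲ)'(xᵏ)'(xˡ)'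
+ Λⁱⱼₖ(xʲ)'(xᵏ)' + Ωⁱⱼ(xʲ)' + Eⁱ = 0` with the stated coefficients. -/
theorem stmt13 (n : ℕ) [NeZero n] (hn : 2 ≤ n)
    (X : Fin n → (Fin n → ℝ) → ℝ) (hX : ∀ i, ContDiff ℝ 2 (X i))
    (x : Fin n → ℝ → ℝ) (hx0 : ∀ t, x 0 t = t) (hxC : ∀ i, ContDiff ℝ 2 (x i))
    (hne : ∀ t : ℝ, deriv (fun s => X 0 (fun m => x m s)) t ≠ 0)
    (haff : ∀ t : ℝ, ∀ i : Fin n, i ≠ 0 →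
      deriv (deriv (fun s => X i (fun m => x m s))) t
          * deriv (fun s => X 0 (fun m => x m s)) t
        = deriv (fun s => X i (fun m => x m s)) t
          * deriv (deriv (fun s => X 0 (fun m => x m s))) t) :
    ∀ t : ℝ, ∀ i : Fin n, i ≠ 0 →
      (∑ j ∈ Finset.univ.erase (0 : Fin n),
          (pdrv 0 (X 0) (fun m => x m t) * pdrv j (X i) (fun m => x m t)
            - pdrv j (X 0) (fun m => x m t) * pdrv 0 (X i) (fun m => x m t))
          * deriv (deriv (x j)) t)
      + (∑ k ∈ Finset.univ.erase (0 : Fin n), ∑ j ∈ Finset.univ.erase (0 : Fin n),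
          (pdrv k (X 0) (fun m => x m t) * pdrv j (X i) (fun m => x m t)
            - pdrv j (X 0) (fun m => x m t) * pdrv k (X i) (fun m => x m t))
          * deriv (x k) t * deriv (deriv (x j)) t)
      + (∑ j ∈ Finset.univ.erase (0 : Fin n), ∑ k ∈ Finset.univ.erase (0 : Fin n),
          ∑ l ∈ Finset.univ.erase (0 : Fin n),
          (pdrv l (X 0) (fun m => x m t) * pdrv k (pdrv j (X i)) (fun m => x m t)
            - pdrv k (pdrv j (X 0)) (fun m => x m t) * pdrv l (X i) (fun m => x m t))
          * deriv (x j) t * deriv (x k) t * deriv (x l) t)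
      + (∑ j ∈ Finset.univ.erase (0 : Fin n), ∑ l ∈ Finset.univ.erase (0 : Fin n),
          (2 * pdrv l (X 0) (fun m => x m t) * pdrv 0 (pdrv j (X i)) (fun m => x m t)
            - 2 * pdrv 0 (pdrv j (X 0)) (fun m => x m t) * pdrv l (X i) (fun m => x m t)
            + pdrv 0 (X 0) (fun m => x m t) * pdrv l (pdrv j (X i)) (fun m => x m t)
            - pdrv 0 (X i) (fun m => x m t) * pdrv l (pdrv j (X 0)) (fun m => x m t))
          * deriv (x j) t * deriv (x l) t)
      + (∑ j ∈ Finset.univ.erase (0 : Fin n),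
          (2 * pdrv 0 (X 0) (fun m => x m t) * pdrv 0 (pdrv j (X i)) (fun m => x m t)
            - 2 * pdrv 0 (pdrv j (X 0)) (fun m => x m t) * pdrv 0 (X i) (fun m => x m t)
            + pdrv j (X 0) (fun m => x m t) * pdrv 0 (pdrv 0 (X i)) (fun m => x m t)
            - pdrv 0 (pdrv 0 (X 0)) (fun m => x m t) * pdrv j (X i) (fun m => x m t))
          * deriv (x j) t)
      + (pdrv 0 (X 0) (fun m => x m t) * pdrv 0 (pdrv 0 (X i)) (fun m => x m t)
          - pdrv 0 (pdrv 0 (X 0)) (fun m => x m t) * pdrv 0 (X i) (fun m => x m t))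
      = 0 := by
  intro t i hi
  have hdX : ∀ r : Fin n, Differentiable ℝ (X r) := fun r => (hX r).differentiable two_ne_zero
  have hp1 : ∀ (r j : Fin n), pdrv j (X r) (fun m => x m t) = Afn (X r) (fun m => x m t) j :=
    fun r j => pdrv_eq_Afn j _ (hdX r _)
  have hp2 : ∀ (r j k : Fin n),
      pdrv k (pdrv j (X r)) (fun m => x m t) = Bfn (X r) (fun m => x m t) k j :=
    fun r j k => pdrv2_eq_Bfn j k _ (hX r)
  have hx0' : x 0 = fun s => s := funext hx0
  have hu0 : deriv (x 0) t = 1 := by rw [hx0']; simp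
  have hw0 : deriv (deriv (x 0)) t = 0 := by rw [hx0']; simp
  simp only [hp2, hp1]
  -- the key identity coming from the affineness assumption
  have e1 := haff t i hi
  rw [chain2 (hX i) hxC t, chain2 (hX 0) hxC t, chain1 (hX i) hxC t, chain1 (hX 0) hxC t] at e1
  have hAi : (∑ m : Fin n, deriv (x m) t * Afn (X i) (fun m => x m t) m)
      = Afn (X i) (fun m => x m t) 0
        + ∑ m ∈ Finset.univ.erase (0 : Fin n), deriv (x m) t * Afn (X i) (fun m => x m t) m :=
    split1 _ _ (Finset.mem_univ 0) _ _ hu0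
  have hA0 : (∑ m : Fin n, deriv (x m) t * Afn (X 0) (fun m => x m t) m)
      = Afn (X 0) (fun m => x m t) 0
        + ∑ m ∈ Finset.univ.erase (0 : Fin n), deriv (x m) t * Afn (X 0) (fun m => x m t) m :=
    split1 _ _ (Finset.mem_univ 0) _ _ hu0
  have hWi : (∑ m : Fin n, deriv (deriv (x m)) t * Afn (X i) (fun m => x m t) m)
      = ∑ m ∈ Finset.univ.erase (0 : Fin n), deriv (deriv (x m)) t * Afn (X i) (fun m => x m t) m :=
    split0 _ _ (Finset.mem_univ 0) _ _ hw0
  have hW0 : (∑ m : Fin n, deriv (deriv (x m)) t * Afn (X 0) (fun m => x m t) m)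
      = ∑ m ∈ Finset.univ.erase (0 : Fin n), deriv (deriv (x m)) t * Afn (X 0) (fun m => x m t) m :=
    split0 _ _ (Finset.mem_univ 0) _ _ hw0
  have hBi : (∑ a : Fin n, ∑ b : Fin n,
        deriv (x a) t * deriv (x b) t * Bfn (X i) (fun m => x m t) a b)
      = Bfn (X i) (fun m => x m t) 0 0
        + 2 * (∑ b ∈ Finset.univ.erase (0 : Fin n),
            deriv (x b) t * Bfn (X i) (fun m => x m t) 0 b)
        + ∑ a ∈ Finset.univ.erase (0 : Fin n), ∑ b ∈ Finset.univ.erase (0 : Fin n),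
            deriv (x a) t * deriv (x b) t * Bfn (X i) (fun m => x m t) a b :=
    split2 _ _ (Finset.mem_univ 0) _ _ hu0 (Bfn_symm _ (hX i))
  have hB0 : (∑ a : Fin n, ∑ b : Fin n,
        deriv (x a) t * deriv (x b) t * Bfn (X 0) (fun m => x m t) a b)
      = Bfn (X 0) (fun m => x m t) 0 0
        + 2 * (∑ b ∈ Finset.univ.erase (0 : Fin n),
            deriv (x b) t * Bfn (X 0) (fun m => x m t) 0 b)
        + ∑ a ∈ Finset.univ.erase (0 : Fin n), ∑ b ∈ Finset.univ.erase (0 : Fin n),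
            deriv (x a) t * deriv (x b) t * Bfn (X 0) (fun m => x m t) a b :=
    split2 _ _ (Finset.mem_univ 0) _ _ hu0 (Bfn_symm _ (hX 0))
  rw [hAi, hA0, hWi, hW0, hBi, hB0] at e1
  -- rewrite the six goal terms
  have h1 : (∑ j ∈ Finset.univ.erase (0 : Fin n),
        (Afn (X 0) (fun m => x m t) 0 * Afn (X i) (fun m => x m t) j
          - Afn (X 0) (fun m => x m t) j * Afn (X i) (fun m => x m t) 0)
        * deriv (deriv (x j)) t)
      = Afn (X 0) (fun m => x m t) 0
          * (∑ j ∈ Finset.univ.erase (0 : Fin n),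
              deriv (deriv (x j)) t * Afn (X i) (fun m => x m t) j)
        - Afn (X i) (fun m => x m t) 0
          * (∑ j ∈ Finset.univ.erase (0 : Fin n),
              deriv (deriv (x j)) t * Afn (X 0) (fun m => x m t) j) :=
    L1 _ _ _ _ _ _
  have h2 : (∑ k ∈ Finset.univ.erase (0 : Fin n), ∑ j ∈ Finset.univ.erase (0 : Fin n),
        (Afn (X 0) (fun m => x m t) k * Afn (X i) (fun m => x m t) j
          - Afn (X 0) (fun m => x m t) j * Afn (X i) (fun m => x m t) k)
        * deriv (x k) t * deriv (deriv (x j)) t)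
      = (∑ k ∈ Finset.univ.erase (0 : Fin n), deriv (x k) t * Afn (X 0) (fun m => x m t) k)
          * (∑ j ∈ Finset.univ.erase (0 : Fin n),
              deriv (deriv (x j)) t * Afn (X i) (fun m => x m t) j)
        - (∑ k ∈ Finset.univ.erase (0 : Fin n), deriv (x k) t * Afn (X i) (fun m => x m t) k)
          * (∑ j ∈ Finset.univ.erase (0 : Fin n),
              deriv (deriv (x j)) t * Afn (X 0) (fun m => x m t) j) :=
    L2 _ _ _ _ _
  have h3 : (∑ j ∈ Finset.univ.erase (0 : Fin n), ∑ k ∈ Finset.univ.erase (0 : Fin n),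
        ∑ l ∈ Finset.univ.erase (0 : Fin n),
        (Afn (X 0) (fun m => x m t) l * Bfn (X i) (fun m => x m t) k j
          - Bfn (X 0) (fun m => x m t) k j * Afn (X i) (fun m => x m t) l)
        * deriv (x j) t * deriv (x k) t * deriv (x l) t)
      = (∑ l ∈ Finset.univ.erase (0 : Fin n), deriv (x l) t * Afn (X 0) (fun m => x m t) l)
          * (∑ c ∈ Finset.univ.erase (0 : Fin n), ∑ d ∈ Finset.univ.erase (0 : Fin n),
              deriv (x c) t * deriv (x d) t * Bfn (X i) (fun m => x m t) c d)
        - (∑ l ∈ Finset.univ.erase (0 : Fin n), deriv (x l) t * Afn (X i) (fun m => x m t) l)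
          * (∑ c ∈ Finset.univ.erase (0 : Fin n), ∑ d ∈ Finset.univ.erase (0 : Fin n),
              deriv (x c) t * deriv (x d) t * Bfn (X 0) (fun m => x m t) c d) :=
    L3 _ _ _ _ _ _
  have h4 : (∑ j ∈ Finset.univ.erase (0 : Fin n), ∑ l ∈ Finset.univ.erase (0 : Fin n),
        (2 * Afn (X 0) (fun m => x m t) l * Bfn (X i) (fun m => x m t) 0 j
          - 2 * Bfn (X 0) (fun m => x m t) 0 j * Afn (X i) (fun m => x m t) l
          + Afn (X 0) (fun m => x m t) 0 * Bfn (X i) (fun m => x m t) l j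
          - Afn (X i) (fun m => x m t) 0 * Bfn (X 0) (fun m => x m t) l j)
        * deriv (x j) t * deriv (x l) t)
      = 2 * (∑ l ∈ Finset.univ.erase (0 : Fin n), deriv (x l) t * Afn (X 0) (fun m => x m t) l)
          * (∑ j ∈ Finset.univ.erase (0 : Fin n),
              deriv (x j) t * Bfn (X i) (fun m => x m t) 0 j)
        - 2 * (∑ l ∈ Finset.univ.erase (0 : Fin n), deriv (x l) t * Afn (X i) (fun m => x m t) l)
          * (∑ j ∈ Finset.univ.erase (0 : Fin n),
              deriv (x j) t * Bfn (X 0) (fun m => x m t) 0 j)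
        + Afn (X 0) (fun m => x m t) 0
          * (∑ c ∈ Finset.univ.erase (0 : Fin n), ∑ d ∈ Finset.univ.erase (0 : Fin n),
              deriv (x c) t * deriv (x d) t * Bfn (X i) (fun m => x m t) c d)
        - Afn (X i) (fun m => x m t) 0
          * (∑ c ∈ Finset.univ.erase (0 : Fin n), ∑ d ∈ Finset.univ.erase (0 : Fin n),
              deriv (x c) t * deriv (x d) t * Bfn (X 0) (fun m => x m t) c d) :=
    L4 _ _ _ _ _ _ _ _ _ _
  have h5 : (∑ j ∈ Finset.univ.erase (0 : Fin n),
        (2 * Afn (X 0) (fun m => x m t) 0 * Bfn (X i) (fun m => x m t) 0 j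
          - 2 * Bfn (X 0) (fun m => x m t) 0 j * Afn (X i) (fun m => x m t) 0
          + Afn (X 0) (fun m => x m t) j * Bfn (X i) (fun m => x m t) 0 0
          - Bfn (X 0) (fun m => x m t) 0 0 * Afn (X i) (fun m => x m t) j)
        * deriv (x j) t)
      = 2 * Afn (X 0) (fun m => x m t) 0
          * (∑ j ∈ Finset.univ.erase (0 : Fin n),
              deriv (x j) t * Bfn (X i) (fun m => x m t) 0 j)
        - 2 * Afn (X i) (fun m => x m t) 0
          * (∑ j ∈ Finset.univ.erase (0 : Fin n),
              deriv (x j) t * Bfn (X 0) (fun m => x m t) 0 j)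
        + Bfn (X i) (fun m => x m t) 0 0
          * (∑ j ∈ Finset.univ.erase (0 : Fin n), deriv (x j) t * Afn (X 0) (fun m => x m t) j)
        - Bfn (X 0) (fun m => x m t) 0 0
          * (∑ j ∈ Finset.univ.erase (0 : Fin n),
              deriv (x j) t * Afn (X i) (fun m => x m t) j) :=
    L5 _ _ _ _ _ _ _ _ _ _
  rw [h1, h2, h3, h4, h5]
  linear_combination e1
end chain
end
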